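/- Let μ be an invertible 2×2 complex matrix, let S be a symmetric invertible 2×2 complex matrix, and let ξ ∈ ℂ be such that μᵀ·S·μ = ξ·det(μ)·S. Then ξ² = 1, and setting A₀ = w·S·diag(−1,1), A₀' = −w·A₀ᵀ·w, and μ' = w·(μᵀ)⁻¹·w, one has μ'·A₀·(μ')⁻¹ = ξ·A₀ and μ·A₀'·μ⁻¹ = ξ·A₀'. -/
import Mathlib

open Matrix

def w2 : Matrix (Fin 2) (Fin 2) ℂ := !![0,1; 1,0]

private def J2 : Matrix (Fin 2) (Fin 2) ℂ := !![0,-1;1,0]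

private lemma key19 (μ : Matrix (Fin 2) (Fin 2) ℂ) :
    μᵀ * J2 * μ = μ.det • J2 := by
  ext i j
  fin_cases i <;> fin_cases j <;>
    simp [J2, Matrix.mul_apply, Fin.sum_univ_two, Matrix.det_fin_two] <;> ring

private lemma hww : w2 * w2 = 1 := by
  ext i j; fin_cases i <;> fin_cases j <;> simp [w2, Matrix.mul_apply, Fin.sum_univ_two]

private lemma hww' (X : Matrix (Fin 2) (Fin 2) ℂ) : w2 * (w2 * X) = X := by
  rw [← Matrix.mul_assoc, hww, Matrix.one_mul]

private lemma hD_eq : (!![(-1 : ℂ), 0; 0, 1]) = J2 * w2 := by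
  ext i j; fin_cases i <;> fin_cases j <;> simp [w2, J2, Matrix.mul_apply, Fin.sum_univ_two]

private lemma hw2D : w2 * !![(-1 : ℂ), 0; 0, 1] = -J2 := by
  ext i j; fin_cases i <;> fin_cases j <;> simp [w2, J2, Matrix.mul_apply, Fin.sum_univ_two]

private lemma hDT : (!![(-1 : ℂ), 0; 0, 1])ᵀ = !![(-1 : ℂ), 0; 0, 1] := by
  ext i j; fin_cases i <;> fin_cases j <;> simp

private lemma hwT : (w2)ᵀ = w2 := by
  ext i j; fin_cases i <;> fin_cases j <;> simp [w2]

/-- If `μᵀ·S·μ = ξ·det(μ)·S` with `μ` invertible and `S` symmetric invertible,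
then `ξ² = 1` and conjugation by `μ' = w·(μᵀ)⁻¹·w` (resp. `μ`) scales
`A₀ = w·S·diag(−1,1)` (resp. `A₀' = −w·A₀ᵀ·w`) by `ξ`. -/
theorem stmt19 (μ : Matrix (Fin 2) (Fin 2) ℂ) (hμ : IsUnit μ.det)
    (S : Matrix (Fin 2) (Fin 2) ℂ) (hS : Sᵀ = S) (hS' : IsUnit S.det)
    (ξ : ℂ) (hξ : μᵀ * S * μ = (ξ * μ.det) • S) :
    let A₀ : Matrix (Fin 2) (Fin 2) ℂ := w2 * S * !![(-1 : ℂ), 0; 0, 1]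
    let A₀' : Matrix (Fin 2) (Fin 2) ℂ := -(w2 * A₀ᵀ * w2)
    let μ' : Matrix (Fin 2) (Fin 2) ℂ := w2 * (μᵀ)⁻¹ * w2
    ξ ^ 2 = 1 ∧ μ' * A₀ * μ'⁻¹ = ξ • A₀ ∧ μ * A₀' * μ⁻¹ = ξ • A₀' := by
  intro A₀ A₀' μ'
  have hdμ : μ.det ≠ 0 := hμ.ne_zero
  have hdS : S.det ≠ 0 := hS'.ne_zero
  -- ξ² = 1
  have hξ2 : ξ ^ 2 = 1 := by
    have h := congrArg Matrix.det hξ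
    rw [det_mul, det_mul, det_transpose, det_smul] at h
    simp only [Fintype.card_fin] at h
    have h2 : (ξ ^ 2 - 1) * (μ.det * μ.det * S.det) = 0 := by linear_combination -h
    rcases mul_eq_zero.mp h2 with h3 | h3
    · exact sub_eq_zero.mp h3
    · exact absurd h3 (mul_ne_zero (mul_ne_zero hdμ hdμ) hdS)
  -- transpose inverses
  have hμT : IsUnit μᵀ.det := by simpa [det_transpose] using hμ
  have hinv1 : (μᵀ)⁻¹ * μᵀ = 1 := nonsing_inv_mul _ hμT
  have hinv2 : μᵀ * (μᵀ)⁻¹ = 1 := mul_nonsing_inv _ hμT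
  -- key identity for μᵀ in place of μ
  have hkey2 : μ * J2 * μᵀ = μ.det • J2 := by
    have := key19 μᵀ
    rwa [transpose_transpose, det_transpose] at this
  have hSμ : S * μ = (ξ * μ.det) • ((μᵀ)⁻¹ * S) := by
    calc S * μ = ((μᵀ)⁻¹ * μᵀ) * (S * μ) := by rw [hinv1, Matrix.one_mul]
      _ = (μᵀ)⁻¹ * (μᵀ * S * μ) := by simp [Matrix.mul_assoc]
      _ = (μᵀ)⁻¹ * ((ξ * μ.det) • S) := by rw [hξ]
      _ = (ξ * μ.det) • ((μᵀ)⁻¹ * S) := by rw [Matrix.mul_smul]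
  have hJT : J2 * (μᵀ)⁻¹ = (μ.det)⁻¹ • (μ * J2) := by
    have h1 : μ * J2 = μ.det • (J2 * (μᵀ)⁻¹) := by
      calc μ * J2 = (μ * J2) * (μᵀ * (μᵀ)⁻¹) := by rw [hinv2, Matrix.mul_one]
        _ = (μ * J2 * μᵀ) * (μᵀ)⁻¹ := by simp [Matrix.mul_assoc]
        _ = μ.det • (J2 * (μᵀ)⁻¹) := by rw [hkey2, Matrix.smul_mul]
    rw [h1, smul_smul, inv_mul_cancel₀ hdμ, one_smul]
  have hcore : μ * (J2 * S) = ξ • (J2 * S * μ) := by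
    have : ξ • (J2 * S * μ) = μ * (J2 * S) := by
      calc ξ • (J2 * S * μ) = ξ • (J2 * (S * μ)) := by rw [Matrix.mul_assoc]
        _ = ξ • (J2 * ((ξ * μ.det) • ((μᵀ)⁻¹ * S))) := by rw [hSμ]
        _ = (ξ * (ξ * μ.det)) • (J2 * ((μᵀ)⁻¹ * S)) := by rw [Matrix.mul_smul, smul_smul]
        _ = μ.det • (J2 * (μᵀ)⁻¹ * S) := by
            rw [← Matrix.mul_assoc]
            congr 1
            have h4 : ξ * (ξ * μ.det) = ξ ^ 2 * μ.det := by ring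
            rw [h4, hξ2, one_mul]
        _ = μ.det • (((μ.det)⁻¹ • (μ * J2)) * S) := by rw [hJT]
        _ = μ * (J2 * S) := by
            rw [Matrix.smul_mul, smul_smul, mul_inv_cancel₀ hdμ, one_smul, Matrix.mul_assoc]
    exact this.symm
  have hJ2T : (J2)ᵀ = -J2 := by
    ext i j; fin_cases i <;> fin_cases j <;> simp [J2]
  have htcore : S * J2 * μᵀ = ξ • (μᵀ * (S * J2)) := by
    have h := congrArg Matrix.transpose hcore
    simp only [transpose_mul, transpose_smul, hS, hJ2T, Matrix.neg_mul, Matrix.mul_neg,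
      smul_neg, neg_inj] at h
    -- h should now be : S * J2 * μᵀ = ξ • (μᵀ * (S * J2)) up to assoc
    simpa [Matrix.mul_assoc] using h
  have hcore2 : (μᵀ)⁻¹ * (S * J2) = ξ • (S * J2 * (μᵀ)⁻¹) := by
    calc (μᵀ)⁻¹ * (S * J2)
        = (μᵀ)⁻¹ * ((S * J2 * μᵀ) * (μᵀ)⁻¹) := by
          rw [Matrix.mul_assoc (S * J2), hinv2, Matrix.mul_one]
      _ = (μᵀ)⁻¹ * ((ξ • (μᵀ * (S * J2))) * (μᵀ)⁻¹) := by rw [htcore]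
      _ = ξ • (((μᵀ)⁻¹ * μᵀ) * ((S * J2) * (μᵀ)⁻¹)) := by
          simp only [Matrix.mul_smul, Matrix.smul_mul, Matrix.mul_assoc]
      _ = ξ • (S * J2 * (μᵀ)⁻¹) := by rw [hinv1, Matrix.one_mul]
  refine ⟨hξ2, ?_, ?_⟩
  · -- μ' * A₀ * μ'⁻¹ = ξ • A₀
    show (w2 * (μᵀ)⁻¹ * w2) * (w2 * S * !![(-1 : ℂ), 0; 0, 1]) * (w2 * (μᵀ)⁻¹ * w2)⁻¹
        = ξ • (w2 * S * !![(-1 : ℂ), 0; 0, 1])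
    have hμ'det : IsUnit (w2 * (μᵀ)⁻¹ * w2).det := by
      rw [det_mul, det_mul, det_nonsing_inv]
      have : (w2).det = -1 := by simp [w2, Matrix.det_fin_two]
      rw [this, det_transpose, Ring.inverse_eq_inv']
      simpa [isUnit_iff_ne_zero] using inv_ne_zero hdμ
    have step2 : (w2 * (μᵀ)⁻¹ * w2) * (w2 * S * !![(-1 : ℂ), 0; 0, 1])
        = (ξ • (w2 * S * !![(-1 : ℂ), 0; 0, 1])) * (w2 * (μᵀ)⁻¹ * w2) := by
      rw [hD_eq]
      calc (w2 * (μᵀ)⁻¹ * w2) * (w2 * S * (J2 * w2))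
          = w2 * ((μᵀ)⁻¹ * (S * J2)) * w2 := by
            simp only [Matrix.mul_assoc, hww']
        _ = w2 * (ξ • (S * J2 * (μᵀ)⁻¹)) * w2 := by rw [hcore2]
        _ = ξ • (w2 * (S * (J2 * ((μᵀ)⁻¹ * w2)))) := by
            simp only [Matrix.mul_smul, Matrix.smul_mul, Matrix.mul_assoc]
        _ = (ξ • (w2 * S * (J2 * w2))) * (w2 * (μᵀ)⁻¹ * w2) := by
            simp only [Matrix.smul_mul, Matrix.mul_assoc, hww']
    rw [step2, Matrix.mul_assoc, mul_nonsing_inv _ hμ'det, Matrix.mul_one]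
  · -- μ * A₀' * μ⁻¹ = ξ • A₀'
    show μ * (-(w2 * (w2 * S * !![(-1 : ℂ), 0; 0, 1])ᵀ * w2)) * μ⁻¹
        = ξ • (-(w2 * (w2 * S * !![(-1 : ℂ), 0; 0, 1])ᵀ * w2))
    have hA0' : -(w2 * (w2 * S * !![(-1 : ℂ), 0; 0, 1])ᵀ * w2) = J2 * S := by
      rw [transpose_mul, transpose_mul, hS, hDT, hwT]
      simp only [Matrix.mul_assoc, hww, Matrix.mul_one]
      rw [← Matrix.mul_assoc w2, hw2D, Matrix.neg_mul, neg_neg]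
    rw [hA0', hcore, Matrix.smul_mul, Matrix.mul_assoc, mul_nonsing_inv _ hμ,
      Matrix.mul_one]
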